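/- Let n ≥ 2 be an integer and 0 < R₁ < R₂. Then the 3×3 matrix M with rows (1, R₁, R₁²), (1, R₂, R₂²), ((R₂ⁿ − R₁ⁿ)/n, (R₂^{n+1} − R₁^{n+1})/(n+1), (R₂^{n+2} − R₁^{n+2})/(n+2)) is invertible; in fact its determinant equals (R₁^{n+2}/(n(n+1)(n+2)))·Ψ̃_n(R₂/R₁)·(R₂ − R₁) up to sign, where Ψ̃_n(t) = n t^{n+2} − (n+2) t^{n+1} + (n+2) t − n, and in particular det M ≠ 0. -/

import Mathlib

private lemma auxA (n : ℕ) (t : ℝ) (ht : 1 ≤ t) :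
    0 ≤ t ^ (n + 1) - (n + 1) * t + n := by
  induction n with
  | zero => simp
  | succ m ih =>
    push_cast
    have key : t ^ (m + 1 + 1) - ((m:ℝ) + 1 + 1) * t + ((m:ℝ) + 1)
        = t * (t ^ (m + 1) - ((m:ℝ) + 1) * t + m) + ((m:ℝ) + 1) * (t - 1) ^ 2 := by ring
    rw [key]
    have h0 : (0:ℝ) ≤ t := le_trans zero_le_one ht
    nlinarith [mul_nonneg h0 ih, sq_nonneg (t - 1)]

private lemma psi_pos (n : ℕ) (hn : 2 ≤ n) (t : ℝ) (ht : 1 < t) :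
    0 < (n : ℝ) * t ^ (n + 2) - (n + 2) * t ^ (n + 1) + (n + 2) * t - n := by
  induction n, hn using Nat.le_induction with
  | base =>
    have key : (2:ℝ) * t ^ (2 + 2) - (2 + 2) * t ^ (2 + 1) + (2 + 2) * t - 2
        = 2 * (t - 1) ^ 3 * (t + 1) := by ring
    push_cast
    rw [key]
    have h3 := mul_pos (mul_pos (by norm_num : (0:ℝ) < 2)
      (pow_pos (by linarith : (0:ℝ) < t - 1) 3)) (by linarith : (0:ℝ) < t + 1)
    linarith
  | succ m hm ih =>
    have hA := auxA (m + 1) t ht.le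
    have key : ((m:ℝ) + 1) * t ^ (m + 1 + 2) - ((m:ℝ) + 1 + 2) * t ^ (m + 1 + 1)
          + ((m:ℝ) + 1 + 2) * t - ((m:ℝ) + 1)
        = t * ((m:ℝ) * t ^ (m + 2) - ((m:ℝ) + 2) * t ^ (m + 1) + ((m:ℝ) + 2) * t - m)
          + (t - 1) * (t ^ (m + 2) - ((m:ℝ) + 2) * t + ((m:ℝ) + 1)) := by ring
    push_cast at ih hA ⊢
    rw [key]
    have ht0 : (0:ℝ) < t := lt_trans one_pos ht
    nlinarith [mul_pos ht0 ih, mul_nonneg (by linarith : (0:ℝ) ≤ t - 1) hA]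

theorem stmt_6 (n : ℕ) (hn : 2 ≤ n) (R₁ R₂ : ℝ) (h1 : 0 < R₁) (h12 : R₁ < R₂)
    (M : Matrix (Fin 3) (Fin 3) ℝ)
    (hM : M = !![1, R₁, R₁ ^ 2;
                 1, R₂, R₂ ^ 2;
                 (R₂ ^ n - R₁ ^ n) / n, (R₂ ^ (n + 1) - R₁ ^ (n + 1)) / (n + 1),
                   (R₂ ^ (n + 2) - R₁ ^ (n + 2)) / (n + 2)])
    (Ψ' : ℝ → ℝ)
    (hΨ' : ∀ t : ℝ, Ψ' t = (n : ℝ) * t ^ (n + 2) - (n + 2) * t ^ (n + 1) + (n + 2) * t - n) :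
    IsUnit M ∧
      (M.det = (R₁ ^ (n + 2) / ((n : ℝ) * (n + 1) * (n + 2))) * Ψ' (R₂ / R₁) * (R₂ - R₁) ∨
        M.det = -((R₁ ^ (n + 2) / ((n : ℝ) * (n + 1) * (n + 2))) * Ψ' (R₂ / R₁) * (R₂ - R₁))) ∧
      M.det ≠ 0 := by
  have hn0 : (n:ℝ) ≠ 0 := Nat.cast_ne_zero.mpr (by omega)
  have hn1 : (n:ℝ) + 1 ≠ 0 := by positivity
  have hn2 : (n:ℝ) + 2 ≠ 0 := by positivity
  have hR1 : R₁ ≠ 0 := ne_of_gt h1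
  have hdet : M.det
      = -((R₁ ^ (n + 2) / ((n : ℝ) * (n + 1) * (n + 2))) * Ψ' (R₂ / R₁) * (R₂ - R₁)) := by
    subst hM
    rw [hΨ']
    simp only [Matrix.det_fin_three, Matrix.cons_val', Matrix.cons_val_zero, Matrix.cons_val_one,
      Matrix.head_cons, Matrix.empty_val', Matrix.cons_val_fin_one, Matrix.head_fin_const,
      Matrix.cons_val_two, Matrix.tail_cons, div_pow, Matrix.of_apply]
    field_simp
    ring
  have ht : 1 < R₂ / R₁ := (one_lt_div h1).mpr h12
  have hpsi : 0 < Ψ' (R₂ / R₁) := by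
    rw [hΨ']; exact psi_pos n hn (R₂ / R₁) ht
  have hnum : 0 < (R₁ ^ (n + 2) / ((n : ℝ) * (n + 1) * (n + 2))) * Ψ' (R₂ / R₁) * (R₂ - R₁) := by
    have hn0' : (0:ℝ) < n := by
      have : (0:ℕ) < n := by omega
      exact_mod_cast this
    have : 0 < R₁ ^ (n + 2) / ((n : ℝ) * (n + 1) * (n + 2)) := by positivity
    have hd : 0 < R₂ - R₁ := by linarith
    positivity
  have hne : M.det ≠ 0 := by
    rw [hdet]
    exact neg_ne_zero.mpr (ne_of_gt hnum)
  exact ⟨(Matrix.isUnit_iff_isUnit_det M).mpr (isUnit_iff_ne_zero.mpr hne),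
    Or.inr hdet, hne⟩
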